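/- In the paper's concrete three-state Trust model, at state v the agent trusts ¬g and r on the basis of d but does not trust ¬g on the basis of d ∧ r: v ⊨ T_d(¬g), v ⊨ T_d(r), and v ⊨ ¬T_{d∧r}(¬g), where T_φ ψ := B(φ) ∧ B(φ ⤳ ψ). -/
import Mathlib

/-- ⪰-maximal elements of X: u ∈ X such that any v ∈ X with v ⪰ u satisfies u ⪰ v. -/
def most {S : Type*} (r : S → S → Prop) (X : Set S) : Set S :=
  {u ∈ X | ∀ v ∈ X, r v u → r u v}

/-- Support: φ ⤳ ψ holds iff most(||φ||) ⊆ ||ψ||. -/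
def supp {S : Type*} (r : S → S → Prop) (X Y : Set S) : Prop :=
  most r X ⊆ Y

/-- Limitedness: nonempty truth sets have ⪰-maximal elements. -/
def limited {S : Type*} (r : S → S → Prop) : Prop :=
  ∀ X : Set S, X.Nonempty → (most r X).Nonempty
/-- States of the concrete model: 0 = v, 1 = w, 2 = s. -/
abbrev St := Fin 3

/-- Preference relation: s ⪰ w and w ⪰ v. -/
def pref : St → St → Prop := fun a b => (a = 2 ∧ b = 1) ∨ (a = 1 ∧ b = 0)

/-- Accessibility relation: v R s, w R w, s R s. -/
def AccR : St → St → Prop := fun a b => (a = 0 ∧ b = 2) ∨ (a = 1 ∧ b = 1) ∨ (a = 2 ∧ b = 2)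

def dSet : Set St := Set.univ
def rSet : Set St := {0, 2}
def gSet : Set St := {0}

/-- B(·) at a state: truth at all R-successors. -/
def holdsB (s : St) (P : St → Prop) : Prop := ∀ t : St, AccR s t → P t

/-- Trust: T_X Y := B(X) ∧ B(X ⤳ Y) (support formulas are state-independent
in the single partition class). -/
def Trusts (s : St) (X Y : Set St) : Prop :=
  holdsB s (· ∈ X) ∧ holdsB s (fun _ => supp pref X Y)

lemma most_d : ∀ u, u ∈ most pref dSet → u = 2 := by
  intro u hu
  obtain ⟨-, h⟩ := hu
  fin_cases u
  · exact absurd (h 1 trivial (Or.inr ⟨rfl, rfl⟩)) (by simp [pref])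
  · exact absurd (h 2 trivial (Or.inl ⟨rfl, rfl⟩)) (by simp [pref])
  · rfl

/-- in the concrete three-state model, at v the agent trusts ¬g
and r on the basis of d, but not ¬g on the basis of d ∧ r. -/
theorem stmt18 :
    Trusts 0 dSet gSetᶜ ∧ Trusts 0 dSet rSet ∧ ¬ Trusts 0 (dSet ∩ rSet) gSetᶜ := by
  refine ⟨⟨fun t _ => trivial, fun t _ u hu => ?_⟩,
          ⟨fun t _ => trivial, fun t _ u hu => ?_⟩, ?_⟩
  · rw [most_d u hu]; simp [gSet]
  · rw [most_d u hu]; simp [rSet]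
  · rintro ⟨-, h⟩
    have hs := h 2 (Or.inl ⟨rfl, rfl⟩)
    have h0 : (0 : St) ∈ most pref (dSet ∩ rSet) := by
      refine ⟨⟨trivial, by simp [rSet]⟩, ?_⟩
      rintro v ⟨-, hv⟩ (⟨-, h21⟩ | ⟨hv1, -⟩)
      · exact absurd h21 (by decide)
      · subst hv1; simp [rSet] at hv
    exact absurd (hs h0) (by simp [gSet])
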